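/- Define polynomials Q_n(x) by Q_{-1}(x) = 1, Q_0(x) = 1 + x, and Q_n(x) = (x+1)·Q_{n-1}(x) + x·Q_{n-2}(x) for n ≥ 1. Then for every n ≥ 0, Q_n(x) has only real zeros. -/

import Mathlib

open Polynomial

/-- `Q (n+1)` is the polynomial `Q_n` of the paper; `Q 0 = Q_{-1} = 1`. -/
noncomputable def Q : ℕ → Polynomial ℝ
  | 0 => 1
  | 1 => 1 + X
  | (n + 2) => (X + 1) * Q (n + 1) + X * Q n

/-- For every `n ≥ 0`, the polynomial `Q_n` has only real zeros. -/
theorem stmt13 (n : ℕ) (z : ℂ) (hz : Polynomial.aeval z (Q (n + 1)) = 0) : z.im = 0 := by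
  by_contra him
  have hz0 : z ≠ 0 := by
    intro h; apply him; rw [h]; simp
  obtain ⟨s, hs⟩ := IsAlgClosed.exists_pow_nat_eq ((z+1)^2 + 4*z) (n := 2) (by norm_num)
  set α : ℂ := ((z+1)+s)/2 with hα
  set β : ℂ := ((z+1)-s)/2 with hβ
  have hadd : α + β = z + 1 := by rw [hα, hβ]; ring
  have hmul : α * β = -z := by rw [hα, hβ]; linear_combination (-(1:ℂ)/4) * hs
  clear_value α β
  clear hα hβ hs
  have key : ∀ m : ℕ, (aeval z (Q m)) * (α - β) = α^(m+1) - β^(m+1) := by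
    intro m
    induction m using Nat.twoStepInduction with
    | zero => simp [Q]
    | one =>
      rw [show Q 1 = 1 + X from rfl]
      simp only [map_add, map_one, aeval_X]
      linear_combination (-(α - β)) * hadd
    | more m ih1 ih2 =>
      rw [show Q (m+2) = (X+1) * Q (m+1) + X * Q m from rfl]
      simp only [map_add, map_mul, aeval_X, map_one]
      linear_combination (z+1) * ih2 + z * ih1 - (α^(m+2) - β^(m+2)) * hadd
        + (α^(m+1) - β^(m+1)) * hmul
  have hroot : α^(n+2) = β^(n+2) := by
    have h0 := key (n+1)
    rw [hz, zero_mul] at h0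
    linear_combination -h0
  have hβ0 : β ≠ 0 := by
    intro h
    apply hz0
    have h2 : α * β = 0 := by rw [h, mul_zero]
    rw [hmul] at h2
    simpa using h2.symm
  have hα0 : α ≠ 0 := by
    intro h
    apply hz0
    have h2 : α * β = 0 := by rw [h, zero_mul]
    rw [hmul] at h2
    simpa using h2.symm
  set ω : ℂ := α / β with hω
  have hω0 : ω ≠ 0 := div_ne_zero hα0 hβ0
  have hωβ : α = ω * β := by rw [hω]; field_simp
  have hωpow : ω ^ (n+2) = 1 := by
    rw [hω, div_pow, hroot, div_self (pow_ne_zero _ hβ0)]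
  clear_value ω
  clear hω hroot hα0
  have habs : ‖ω‖ = 1 := by
    have h1 : (‖ω‖) ^ (n+2) = 1 := by
      rw [← norm_pow, hωpow, norm_one]
    rcases lt_trichotomy (‖ω‖) 1 with h | h | h
    · exfalso
      have h2 : (‖ω‖) ^ (n+2) < 1 :=
        pow_lt_one₀ (norm_nonneg ω) h (by omega)
      rw [h1] at h2
      exact lt_irrefl _ h2
    · exact h
    · exfalso
      have h2 : 1 < (‖ω‖) ^ (n+2) := one_lt_pow₀ h (by omega)
      rw [h1] at h2
      exact lt_irrefl _ h2
  have hz1 : z + 1 = ω * β + β := by rw [← hωβ, ← hadd]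
  have hz2 : z = -(ω * β^2) := by
    have h2 : ω * β * β = -z := by rw [← hωβ]; exact hmul
    linear_combination h2
  have hid : ω * (z+1)^2 + z * (1+ω)^2 = 0 := by
    linear_combination (ω * (z + 1 + ω*β + β)) * hz1 + (1+ω)^2 * hz2
  have hωinv : ω * ω⁻¹ = 1 := mul_inv_cancel₀ hω0
  have h3 : ω * (z^2 + (ω + 4 + ω⁻¹)*z + 1) = 0 := by
    linear_combination hid + z * hωinv
  have h2 : z^2 + (ω + 4 + ω⁻¹)*z + 1 = 0 := by
    rcases mul_eq_zero.mp h3 with h | h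
    · exact absurd h hω0
    · exact h
  have hconj : ω⁻¹ = starRingEnd ℂ ω := Complex.inv_eq_conj habs
  have hb : ω + 4 + ω⁻¹ = ((2 * ω.re + 4 : ℝ) : ℂ) := by
    rw [hconj, show ω + 4 + starRingEnd ℂ ω = (ω + starRingEnd ℂ ω) + 4 by ring,
      Complex.add_conj]
    push_cast
    ring
  rw [hb] at h2
  set c : ℝ := 2 * ω.re + 4 with hc
  have hcge : 2 ≤ c := by
    have h5 := Complex.abs_re_le_norm ω
    rw [habs] at h5
    have h6 := abs_le.mp h5
    rw [hc]; linarith [h6.1]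
  have hre : z.re^2 - z.im^2 + c * z.re + 1 = 0 := by
    have h7 := congrArg Complex.re h2
    simp [Complex.add_re, Complex.mul_re, Complex.ofReal_re, Complex.ofReal_im, sq] at h7
    linarith [h7]
  have him2 : 2 * z.re * z.im + c * z.im = 0 := by
    have h8 := congrArg Complex.im h2
    simp [Complex.add_im, Complex.mul_im, Complex.ofReal_re, Complex.ofReal_im, sq] at h8
    linarith [h8]
  have h4 : 2 * z.re + c = 0 := by
    have h5 : z.im * (2 * z.re + c) = 0 := by linear_combination him2
    rcases mul_eq_zero.mp h5 with h | h
    · exact absurd h him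
    · exact h
  have ht2 : 0 < z.im^2 := by positivity
  nlinarith [hre, h4, hcge, ht2]
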